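/- In a zero-sum multi-player game, a strategy profile σ satisfies the individual guarantee condition (V^k(σ) ≤ V^k(σ^k, s^{-k}) for all k and all s^{-k}) if and only if for every proper subset A of players the coalition payoff satisfies V^A(σ^A, σ^{-A}) ≥ V^A(s^A, σ^{-A}) for all s^A, and this holds if and only if σ is an optimal equilibrium. -/
import Mathlib


/-- The profile in which the coalition `A` plays `τ` while all remaining players
play according to `ρ`, i.e. `(τ^A, ρ^{-A})`. -/
def comb {ι : Type*} [DecidableEq ι] {S : ι → Type*} (A : Finset ι)
    (τ ρ : ∀ i, S i) : ∀ i, S i :=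
  fun i => if i ∈ A then τ i else ρ i

/-- In a zero-sum multi-player game, a strategy profile `σ` satisfies the individual
guarantee condition (`V^k(σ) ≤ V^k(σ^k, s^{-k})` for all `k` and all `s^{-k}`)
if and only if for every proper subset `A` of players the coalition payoff
satisfies `V^A(σ^A, σ^{-A}) ≥ V^A(s^A, σ^{-A})` for all `s^A`, and this holds
if and only if `σ` is an optimal equilibrium. -/
theorem zero_sum_guarantee_iff_coalition_iff_optimal {ι : Type*} [Fintype ι]
    [DecidableEq ι] {S : ι → Type*} [∀ i, Nonempty (S i)]
    (V : ι → (∀ i, S i) → ℝ)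
    (hzs : ∀ s : ∀ i, S i, ∑ i, V i s = 0)
    (σ : ∀ i, S i) :
    ((∀ k, ∀ ρ : ∀ i, S i, V k σ ≤ V k (Function.update ρ k (σ k))) ↔
      (∀ A : Finset ι, A ≠ Finset.univ →
        ∀ τ : ∀ i, S i, ∑ i ∈ A, V i (comb A τ σ) ≤ ∑ i ∈ A, V i σ)) ∧
    ((∀ A : Finset ι, A ≠ Finset.univ →
        ∀ τ : ∀ i, S i, ∑ i ∈ A, V i (comb A τ σ) ≤ ∑ i ∈ A, V i σ) ↔
      ((∀ k, ∀ ρ : ∀ i, S i, V k σ ≤ V k (Function.update ρ k (σ k))) ∧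
        (∀ k, ∀ a : S k, V k (Function.update σ k a) ≤ V k σ))) := by
  -- guarantee → coalition (no properness needed)
  have hGC : (∀ k, ∀ ρ : ∀ i, S i, V k σ ≤ V k (Function.update ρ k (σ k))) →
      ∀ A : Finset ι, ∀ τ : ∀ i, S i,
        ∑ i ∈ A, V i (comb A τ σ) ≤ ∑ i ∈ A, V i σ := by
    intro hg A τ
    have h1 := Finset.sum_add_sum_compl A (fun i => V i (comb A τ σ))
    have h2 := Finset.sum_add_sum_compl A (fun i => V i σ)
    rw [hzs] at h1 h2
    have hle : ∀ k ∈ Aᶜ, V k σ ≤ V k (comb A τ σ) := by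
      intro k hk
      have hk' : k ∉ A := Finset.mem_compl.mp hk
      have heq : Function.update (comb A τ σ) k (σ k) = comb A τ σ := by
        have hc : comb A τ σ k = σ k := by simp [comb, hk']
        rw [← hc, Function.update_eq_self]
      have := hg k (comb A τ σ)
      rwa [heq] at this
    have := Finset.sum_le_sum hle
    linarith
  -- coalition → guarantee
  have hCG : (∀ A : Finset ι, A ≠ Finset.univ →
        ∀ τ : ∀ i, S i, ∑ i ∈ A, V i (comb A τ σ) ≤ ∑ i ∈ A, V i σ) →
      ∀ k, ∀ ρ : ∀ i, S i, V k σ ≤ V k (Function.update ρ k (σ k)) := by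
    intro hc k ρ
    have hk : ({k}ᶜ : Finset ι) ≠ Finset.univ := by
      intro h
      have : k ∈ ({k}ᶜ : Finset ι) := h ▸ Finset.mem_univ k
      simp at this
    have hcomb : comb ({k}ᶜ) ρ σ = Function.update ρ k (σ k) := by
      funext i
      by_cases hi : i = k
      · subst hi; simp [comb]
      · simp [comb, hi, Function.update_of_ne hi]
    have h3 := hc ({k}ᶜ) hk ρ
    rw [hcomb] at h3
    have h1 := Finset.sum_add_sum_compl ({k} : Finset ι)
      (fun i => V i (Function.update ρ k (σ k)))
    have h2 := Finset.sum_add_sum_compl ({k} : Finset ι) (fun i => V i σ)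
    rw [hzs] at h1 h2
    rw [Finset.sum_singleton] at h1 h2
    linarith
  refine ⟨⟨fun hg A _ τ => hGC hg A τ, hCG⟩, ⟨?_, fun ⟨hg, _⟩ A _ τ => hGC hg A τ⟩⟩
  intro hc
  refine ⟨hCG hc, ?_⟩
  intro k a
  by_cases hk : ({k} : Finset ι) = Finset.univ
  · have hz : ∀ s : ∀ i, S i, V k s = 0 := by
      intro s
      have := hzs s
      rw [← hk, Finset.sum_singleton] at this
      exact this
    rw [hz, hz]
  · have hcomb : comb {k} (Function.update σ k a) σ = Function.update σ k a := by
      funext i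
      by_cases hi : i = k
      · subst hi; simp [comb]
      · simp [comb, hi, Function.update_of_ne hi]
    have h3 := hc {k} hk (Function.update σ k a)
    rw [hcomb, Finset.sum_singleton, Finset.sum_singleton] at h3
    exact h3
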